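/- For every z₀ ∈ ℍ, the set of values {f(z₀) : f ∈ H_u} equals {z ∈ ℂ : Im z > Im z₀} ∪ {z₀}. -/

import Mathlib

open Filter Set Real

noncomputable section

/-- The upper half-plane ℍ = {z ∈ ℂ : Im z > 0}. -/
def UHP : Set ℂ := {z : ℂ | 0 < z.im}

/-- The angular limit ∠lim_{z→∞} g(z) = c: for every δ ∈ (0, π/2), g(z) → c as
|z| → ∞ with z in the sector {z ∈ ℍ : δ ≤ arg z ≤ π − δ}. -/
def AngularLimitAtInfty (g : ℂ → ℂ) (c : ℂ) : Prop :=
  ∀ δ : ℝ, 0 < δ → δ < Real.pi / 2 →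
    Tendsto g
      (Filter.comap (fun z : ℂ => ‖z‖) Filter.atTop ⊓
        Filter.principal {z : ℂ | 0 < z.im ∧ δ ≤ Complex.arg z ∧
          Complex.arg z ≤ Real.pi - δ})
      (nhds c)

/-- The class H_u: injective holomorphic self-maps of ℍ with hydrodynamic
normalization ∠lim_{z→∞} z·(f(z) − z) = c ∈ ℝ. -/
def MemHu (f : ℂ → ℂ) : Prop :=
  DifferentiableOn ℂ f UHP ∧ Set.MapsTo f UHP UHP ∧ Set.InjOn f UHP ∧
    ∃ c : ℝ, AngularLimitAtInfty (fun z => z * (f z - z)) (c : ℂ)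

def msqrt (u : ℂ) : ℂ := Complex.exp (Complex.log u / 2)

lemma msqrt_sq {u : ℂ} (h : u ≠ 0) : msqrt u ^ 2 = u := by
  rw [msqrt, ← Complex.exp_nat_mul]
  push_cast
  rw [show (2:ℂ) * (Complex.log u / 2) = Complex.log u by ring, Complex.exp_log h]

lemma msqrt_re_pos {u : ℂ} (h : u ∈ Complex.slitPlane) : 0 < (msqrt u).re := by
  rw [msqrt, Complex.exp_re]
  apply mul_pos (Real.exp_pos _)
  apply Real.cos_pos_of_mem_Ioo
  have h1 : -π < Complex.arg u := Complex.neg_pi_lt_arg u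
  have h2 : Complex.arg u ≠ π := Complex.slitPlane_arg_ne_pi h
  have h3 : Complex.arg u ≤ π := (abs_le.mp (Complex.abs_arg_le_pi u)).2
  have h4 : Complex.arg u < π := lt_of_le_of_ne h3 h2
  have he : (Complex.log u / 2).im = Complex.arg u / 2 := by
    simp [Complex.div_im, Complex.log_im, Complex.normSq_apply]
  rw [he]
  constructor <;> [linarith; linarith]

lemma msqrt_eq {u x : ℂ} (hx : 0 < x.re) (hsq : x ^ 2 = u) : msqrt u = x := by
  have hx0 : x ≠ 0 := fun h => by simp [h] at hx
  have hu0 : u ≠ 0 := by rw [← hsq]; exact pow_ne_zero _ hx0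
  have huslit : u ∈ Complex.slitPlane := by
    rw [Complex.mem_slitPlane_iff]
    by_contra hc
    push_neg at hc
    obtain ⟨h1, h2⟩ := hc
    rw [← hsq] at h1 h2
    have him : (x^2).im = 2 * x.re * x.im := by simp [sq, Complex.mul_im]; ring
    have hre : (x^2).re = x.re^2 - x.im^2 := by simp [sq, Complex.mul_re]
    rw [him] at h2
    have : x.im = 0 := by nlinarith
    rw [hre, this] at h1
    nlinarith
  have h1 : msqrt u ^ 2 = x ^ 2 := by rw [msqrt_sq hu0, hsq]
  have h2 : (msqrt u - x) * (msqrt u + x) = 0 := by linear_combination h1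
  rcases mul_eq_zero.mp h2 with h | h
  · exact sub_eq_zero.mp h
  · exfalso
    have hr := msqrt_re_pos huslit
    have : (msqrt u + x).re > 0 := by simp [Complex.add_re]; linarith
    rw [h] at this; simp at this

def slitMap (a t : ℝ) (z : ℂ) : ℂ := a + Complex.I * msqrt (2*t - (z - a)^2)

lemma slit_u_mem {a t : ℝ} (ht : 0 ≤ t) {z : ℂ} (hz : 0 < z.im) :
    2*(t:ℂ) - (z - a)^2 ∈ Complex.slitPlane := by
  rw [Complex.mem_slitPlane_iff]
  by_contra hc
  push_neg at hc
  obtain ⟨h1, h2⟩ := hc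
  have him : (2*(t:ℂ) - (z - a)^2).im = -(2*(z.re - a)*z.im) := by
    simp [sq, Complex.mul_im, Complex.mul_re, Complex.sub_re, Complex.sub_im,
      Complex.ofReal_re, Complex.ofReal_im]
    ring
  have hre : (2*(t:ℂ) - (z - a)^2).re = 2*t - ((z.re - a)^2 - z.im^2) := by
    simp [sq, Complex.mul_im, Complex.mul_re, Complex.sub_re, Complex.sub_im,
      Complex.ofReal_re, Complex.ofReal_im]
  rw [him] at h2
  have hre0 : z.re - a = 0 := by
    rcases mul_eq_zero.mp (by linarith : (2*(z.re - a))*z.im = 0) with h | h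
    · linarith
    · linarith
  rw [hre, hre0] at h1
  nlinarith

lemma slit_im_pos {a t : ℝ} (ht : 0 ≤ t) {z : ℂ} (hz : 0 < z.im) :
    0 < (slitMap a t z).im := by
  have := msqrt_re_pos (slit_u_mem ht hz (a := a))
  simp only [slitMap, Complex.add_im, Complex.ofReal_im, Complex.mul_im, Complex.I_re,
    Complex.I_im, zero_mul, one_mul, zero_add]
  linarith

lemma slit_sq {a t : ℝ} (ht : 0 ≤ t) {z : ℂ} (hz : 0 < z.im) :
    (slitMap a t z - a)^2 = (z - a)^2 - 2*t := by
  have hu0 : 2*(t:ℂ) - (z - a)^2 ≠ 0 := Complex.slitPlane_ne_zero (slit_u_mem ht hz)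
  have : slitMap a t z - a = Complex.I * msqrt (2*t - (z - a)^2) := by
    simp [slitMap]
  rw [this, mul_pow, Complex.I_sq, msqrt_sq hu0]
  ring

lemma slit_injOn {a t : ℝ} (ht : 0 ≤ t) : Set.InjOn (slitMap a t) UHP := by
  intro z hz w hw h
  have h1 : (slitMap a t z - a)^2 = (slitMap a t w - a)^2 := by rw [h]
  rw [slit_sq ht hz, slit_sq ht hw] at h1
  have h2 : (z - w) * (z + w - 2*a) = 0 := by linear_combination h1
  rcases mul_eq_zero.mp h2 with h3 | h3
  · exact sub_eq_zero.mp h3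
  · exfalso
    have : (z + w - 2*(a:ℂ)).im = z.im + w.im := by simp
    have him : (z + w - 2*(a:ℂ)).im = 0 := by rw [h3]; simp
    have hz' : 0 < z.im := hz
    have hw' : 0 < w.im := hw
    rw [this] at him
    linarith

lemma slit_diff {a t : ℝ} (ht : 0 ≤ t) : DifferentiableOn ℂ (slitMap a t) UHP := by
  intro z hz
  apply DifferentiableAt.differentiableWithinAt
  have hu : 2*(t:ℂ) - (z - a)^2 ∈ Complex.slitPlane := slit_u_mem ht hz
  have hpoly : DifferentiableAt ℂ (fun z : ℂ => 2*(t:ℂ) - (z - a)^2) z := by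
    apply DifferentiableAt.sub (differentiableAt_const _)
    exact ((differentiableAt_id.sub (differentiableAt_const _)).pow 2)
  have hlog : DifferentiableAt ℂ (fun z : ℂ => Complex.log (2*(t:ℂ) - (z - a)^2)) z :=
    hpoly.clog hu
  have : DifferentiableAt ℂ (fun z : ℂ => msqrt (2*(t:ℂ) - (z - a)^2)) z := by
    unfold msqrt
    exact Complex.differentiable_exp.differentiableAt.comp z (hlog.div_const 2)
  exact (differentiableAt_const _).add ((differentiableAt_const _).mul this)

lemma sin_ge_of_mem {δ θ : ℝ} (hδ1 : 0 < δ) (hδ2 : δ < π/2) (h1 : δ ≤ θ)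
    (h2 : θ ≤ π - δ) : Real.sin δ ≤ Real.sin θ := by
  rcases le_or_gt θ (π/2) with h | h
  · exact Real.strictMonoOn_sin.monotoneOn ⟨by linarith, by linarith⟩ ⟨by linarith, h⟩ h1
  · rw [← Real.sin_pi_sub θ]
    exact Real.strictMonoOn_sin.monotoneOn ⟨by linarith, by linarith⟩
      ⟨by linarith, by linarith⟩ (by linarith)

lemma slit_angular (a t : ℝ) (ht : 0 ≤ t) :
    AngularLimitAtInfty (fun z => z * (slitMap a t z - z)) ((-t : ℝ) : ℂ) := by
  intro δ hδ1 hδ2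
  set P : Set ℂ := {z : ℂ | 0 < z.im ∧ δ ≤ Complex.arg z ∧ Complex.arg z ≤ Real.pi - δ}
  set F := Filter.comap (fun z : ℂ => ‖z‖) Filter.atTop ⊓ Filter.principal P with hF
  have hsinpos : 0 < Real.sin δ := Real.sin_pos_of_pos_of_lt_pi hδ1 (by linarith [Real.pi_pos])
  have hmemP : ∀ᶠ z in F, z ∈ P := by
    rw [hF]; exact eventually_inf_principal.mpr (Eventually.of_forall fun z hz => hz)
  -- basic facts for z ∈ P
  have hS : ∀ z : ℂ, 0 < z.im → 0 < (Complex.I * msqrt (2*t - (z - a)^2)).im := by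
    intro z hz
    have := msqrt_re_pos (slit_u_mem ht hz (a := a))
    simp only [Complex.mul_im, Complex.I_re, Complex.I_im, zero_mul, one_mul, zero_add]
    linarith
  have habs : ∀ z ∈ P, Real.sin δ * ‖z‖ ≤ z.im := by
    intro z hz
    have h0 : ‖z‖ * Real.sin (Complex.arg z) = z.im := Complex.norm_mul_sin_arg z
    have h1 : Real.sin δ ≤ Real.sin (Complex.arg z) := sin_ge_of_mem hδ1 hδ2 hz.2.1 hz.2.2
    nlinarith [norm_nonneg z]
  have habspos : ∀ z ∈ P, 0 < ‖z‖ := by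
    intro z hz
    have : z ≠ 0 := fun h => by simp [h] at hz; exact lt_irrefl 0 hz.1
    exact norm_pos_iff.mpr this
  -- the difference E z
  set E := fun z : ℂ => slitMap a t z - z with hEdef
  have hEeq : ∀ z ∈ P, E z * (slitMap a t z + z - 2*a) = -(2*t) := by
    intro z hz
    have := slit_sq ht hz.1 (a := a) (t := t)
    linear_combination this
  have hden_im : ∀ z ∈ P, z.im < (slitMap a t z + z - 2*(a:ℂ)).im := by
    intro z hz
    have h1 := hS z hz.1
    have : slitMap a t z + z - 2*(a:ℂ) = (Complex.I * msqrt (2*t - (z - a)^2)) + z - a := by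
      simp [slitMap]; ring
    rw [this]
    simp only [Complex.sub_im, Complex.add_im, Complex.ofReal_im]
    linarith
  have hden_ne : ∀ z ∈ P, slitMap a t z + z - 2*(a:ℂ) ≠ 0 := by
    intro z hz h
    have := hden_im z hz
    rw [h] at this
    simp at this
    linarith [hz.1]
  have habsden : ∀ z ∈ P, z.im ≤ ‖slitMap a t z + z - 2*(a:ℂ)‖ := by
    intro z hz
    calc z.im ≤ (slitMap a t z + z - 2*(a:ℂ)).im := le_of_lt (hden_im z hz)
    _ ≤ |(slitMap a t z + z - 2*(a:ℂ)).im| := le_abs_self _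
    _ ≤ _ := Complex.abs_im_le_norm _
  -- E → 0
  have tabs : Tendsto (fun z : ℂ => ‖z‖) F atTop :=
    (tendsto_comap).mono_left inf_le_left
  have tinv : Tendsto (fun z : ℂ => (‖z‖)⁻¹) F (nhds 0) :=
    tendsto_inv_atTop_zero.comp tabs
  have hEbound : ∀ᶠ z in F, ‖E z‖ ≤ (2*t/Real.sin δ) * (‖z‖)⁻¹ := by
    filter_upwards [hmemP] with z hz
    have h1 : ‖E z‖ * ‖slitMap a t z + z - 2*(a:ℂ)‖ = 2*t := by
      rw [← norm_mul, hEeq z hz,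
        show (-(2*(t:ℂ))) = ((-(2*t) : ℝ) : ℂ) by push_cast; ring,
        Complex.norm_real, Real.norm_eq_abs, abs_neg, abs_of_nonneg (by positivity)]
    have h2 : ‖E z‖ ≤ 2*t / z.im := by
      rw [le_div_iff₀ (hz.1)]
      calc ‖E z‖ * z.im ≤ ‖E z‖ * ‖slitMap a t z + z - 2*(a:ℂ)‖ := by
            apply mul_le_mul_of_nonneg_left (habsden z hz) (norm_nonneg _)
      _ = 2*t := h1
    calc ‖E z‖ = ‖E z‖ := rfl
    _ ≤ 2*t / z.im := h2
    _ ≤ (2*t/Real.sin δ) * (‖z‖)⁻¹ := by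
        rw [show 2*t/Real.sin δ * (‖z‖)⁻¹ = 2*t/(Real.sin δ * ‖z‖) by
          field_simp]
        rw [div_le_div_iff₀ hz.1 (mul_pos hsinpos (habspos z hz))]
        nlinarith [habs z hz, habspos z hz]
  have hE0 : Tendsto E F (nhds 0) := by
    apply squeeze_zero_norm' hEbound
    have h := tinv.const_mul (2*t/Real.sin δ)
    rw [mul_zero] at h
    exact h
  have tinvC : Tendsto (fun z : ℂ => z⁻¹) F (nhds 0) := by
    rw [tendsto_zero_iff_norm_tendsto_zero]
    simpa [norm_inv] using tinv
  have hzne : ∀ z ∈ P, z ≠ 0 := by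
    intro z hz h
    have h1 : 0 < z.im := hz.1
    rw [h] at h1
    simp at h1
  have hD : Tendsto (fun z : ℂ => (slitMap a t z + z - 2*(a:ℂ)) * z⁻¹) F (nhds 2) := by
    have heq : ∀ᶠ z in F, E z * z⁻¹ + 2 - 2*(a:ℂ)*z⁻¹
        = (slitMap a t z + z - 2*(a:ℂ)) * z⁻¹ := by
      filter_upwards [hmemP] with z hz
      have hz0 : z ≠ 0 := hzne z hz
      field_simp [hEdef]
      ring
    apply Tendsto.congr' heq
    have h2 : Tendsto (fun z : ℂ => E z * z⁻¹ + 2 - 2*(a:ℂ)*z⁻¹) F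
        (nhds (0 * 0 + 2 - 2*(a:ℂ)*0)) :=
      ((hE0.mul tinvC).add tendsto_const_nhds).sub (tinvC.const_mul _)
    simpa using h2
  have hfinal : ∀ᶠ z in F, (-(2*(t:ℂ))) / ((slitMap a t z + z - 2*(a:ℂ)) * z⁻¹)
      = z * (slitMap a t z - z) := by
    filter_upwards [hmemP] with z hz
    have hz0 : z ≠ 0 := hzne z hz
    have hd := hden_ne z hz
    rw [div_eq_iff (mul_ne_zero hd (inv_ne_zero hz0))]
    rw [show z * (slitMap a t z - z) * ((slitMap a t z + z - 2*(a:ℂ)) * z⁻¹) = (slitMap a t z - z) * (slitMap a t z + z - 2*(a:ℂ)) * (z * z⁻¹) by ring, mul_inv_cancel₀ hz0, mul_one]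
    exact (hEeq z hz).symm
  apply Tendsto.congr' hfinal
  have h3 : Tendsto (fun z : ℂ => (-(2*(t:ℂ))) / ((slitMap a t z + z - 2*(a:ℂ)) * z⁻¹)) F
      (nhds ((-(2*(t:ℂ))) / 2)) := tendsto_const_nhds.div hD two_ne_zero
  have : ((-t : ℝ) : ℂ) = (-(2*(t:ℂ))) / 2 := by push_cast; ring
  rw [this]
  exact h3

lemma exists_params (z₀ w : ℂ) (h0 : 0 < z₀.im) (hw : z₀.im < w.im) :
    ∃ a t : ℝ, 0 < t ∧ ((z₀ - a)^2 - (w - a)^2 : ℂ) = 2*t := by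
  have hden : z₀.im - w.im ≠ 0 := by linarith
  set a := (z₀.re*z₀.im - w.re*w.im)/(z₀.im - w.im) with ha
  have hima : (z₀.re - a)*z₀.im = (w.re - a)*w.im := by
    rw [ha]; field_simp; ring
  set t := (((z₀.re-a)^2 - z₀.im^2) - ((w.re-a)^2 - w.im^2))/2 with htdef
  have hsq : (z₀.re - a)^2*z₀.im^2 = (w.re - a)^2*w.im^2 := by
    rw [← mul_pow, ← mul_pow, hima]
  clear_value a t
  have ht : 0 < t := by
    rw [htdef]
    have h2 : 0 < ((z₀.re - a)^2 + w.im^2) * (w.im^2 - z₀.im^2) := by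
      have hv : 0 < w.im := lt_trans h0 hw
      apply mul_pos (add_pos_of_nonneg_of_pos (sq_nonneg _) (by nlinarith))
      nlinarith
    nlinarith [sq_nonneg w.im]
  refine ⟨a, t, ht, ?_⟩
  apply Complex.ext
  · simp only [Complex.sub_re, Complex.mul_re, Complex.ofReal_re, Complex.ofReal_im,
      sq, Complex.mul_im, Complex.sub_im, Complex.re_ofNat, Complex.im_ofNat]
    ring_nf
    ring_nf at htdef
    linarith [htdef]
  · simp only [Complex.sub_im, Complex.mul_im, Complex.ofReal_re, Complex.ofReal_im,
      sq, Complex.mul_re, Complex.sub_re, Complex.re_ofNat, Complex.im_ofNat]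
    ring_nf
    ring_nf at hima
    linarith [hima]

lemma isOpen_UHP : IsOpen UHP := isOpen_lt continuous_const Complex.continuous_im

lemma normSq_conj_sub (p q : ℂ) :
    Complex.normSq (p - (starRingEnd ℂ) q) - Complex.normSq (p - q) = 4 * p.im * q.im := by
  simp [Complex.normSq_apply, Complex.sub_re, Complex.sub_im, Complex.conj_re, Complex.conj_im]
  ring

lemma sub_conj_ne {p q : ℂ} (hp : 0 < p.im) (hq : 0 < q.im) : p - (starRingEnd ℂ) q ≠ 0 := by
  intro h
  have : (p - (starRingEnd ℂ) q).im = p.im + q.im := by simp [Complex.sub_im, Complex.conj_im]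
  rw [h] at this
  simp at this
  linarith

lemma normSq_lt_of_im {p q : ℂ} (hp : 0 < p.im) (hq : 0 < q.im) :
    Complex.normSq (p - q) < Complex.normSq (p - (starRingEnd ℂ) q) := by
  nlinarith [normSq_conj_sub p q]

lemma abs_ratio_lt_one {p q : ℂ} (hp : 0 < p.im) (hq : 0 < q.im) :
    ‖(p - q)/(p - (starRingEnd ℂ) q)‖ < 1 := by
  rw [norm_div, div_lt_one (norm_pos_iff.mpr (sub_conj_ne hp hq))]
  have h1 := normSq_lt_of_im hp hq
  rw [← Complex.sq_norm, ← Complex.sq_norm] at h1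
  nlinarith [norm_nonneg (p - q), norm_nonneg (p - (starRingEnd ℂ) q)]

lemma schwarz_pick {f : ℂ → ℂ} (hd : DifferentiableOn ℂ f UHP) (hm : Set.MapsTo f UHP UHP)
    {z w : ℂ} (hz : z ∈ UHP) (hw : w ∈ UHP) :
    z.im * w.im * Complex.normSq (f z - (starRingEnd ℂ) (f w)) ≤
      (f z).im * (f w).im * Complex.normSq (z - (starRingEnd ℂ) w) := by
  have hwim : 0 < w.im := hw
  have hzim : 0 < z.im := hz
  set cw := (starRingEnd ℂ) w with hcw
  set C : ℂ → ℂ := fun ξ => (w - cw * ξ)/(1 - ξ) with hC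
  have hone : ∀ ξ : ℂ, ξ ∈ Metric.ball (0:ℂ) 1 → (1:ℂ) - ξ ≠ 0 := by
    intro ξ hξ h
    rw [mem_ball_zero_iff] at hξ
    have : ξ = 1 := by linear_combination -h
    rw [this] at hξ
    norm_num at hξ
  have hCmem : ∀ ξ ∈ Metric.ball (0:ℂ) 1, C ξ ∈ UHP := by
    intro ξ hξ
    have hξ' : ‖ξ‖ < 1 := mem_ball_zero_iff.mp hξ
    have hnormsq : Complex.normSq ξ < 1 := by
      rw [← Complex.sq_norm]; nlinarith [norm_nonneg ξ]
    have hD := hone ξ hξ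
    have hDpos : 0 < Complex.normSq (1 - ξ) := Complex.normSq_pos.mpr hD
    have him : (C ξ).im = w.im * (1 - Complex.normSq ξ) / Complex.normSq (1 - ξ) := by
      rw [hC]
      simp only [Complex.div_im]
      rw [div_sub_div_same]
      congr 1
      simp only [hcw, Complex.sub_im, Complex.sub_re, Complex.mul_im, Complex.mul_re,
        Complex.conj_re, Complex.conj_im, Complex.normSq_apply, Complex.one_re, Complex.one_im]
      ring
    have : 0 < (C ξ).im := by
      rw [him]
      apply div_pos _ hDpos
      nlinarith
    exact this
  have hC0 : C 0 = w := by rw [hC]; simp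
  set G : ℂ → ℂ := fun ξ => (f (C ξ) - f w)/(f (C ξ) - (starRingEnd ℂ) (f w)) with hG
  have hfw : 0 < (f w).im := hm hw
  have hG0 : G 0 = 0 := by rw [hG]; simp [hC0]
  have hGd : DifferentiableOn ℂ G (Metric.ball (0:ℂ) 1) := by
    intro ξ hξ
    apply DifferentiableAt.differentiableWithinAt
    have hCd : DifferentiableAt ℂ C ξ := by
      rw [hC]
      exact ((differentiableAt_const _).sub ((differentiableAt_const _).mul differentiableAt_id)).div
        ((differentiableAt_const _).sub differentiableAt_id) (hone ξ hξ)
    have hCin : C ξ ∈ UHP := hCmem ξ hξ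
    have hfd : DifferentiableAt ℂ f (C ξ) :=
      (hd (C ξ) hCin).differentiableAt (isOpen_UHP.mem_nhds hCin)
    have hfC : DifferentiableAt ℂ (fun ξ => f (C ξ)) ξ := hfd.comp ξ hCd
    have hne : f (C ξ) - (starRingEnd ℂ) (f w) ≠ 0 := sub_conj_ne (hm hCin) hfw
    rw [hG]
    exact (hfC.sub (differentiableAt_const _)).div (hfC.sub (differentiableAt_const _)) hne
  have hGm : Set.MapsTo G (Metric.ball (0:ℂ) 1) (Metric.ball (0:ℂ) 1) := by
    intro ξ hξ
    rw [mem_ball_zero_iff, hG]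
    exact abs_ratio_lt_one (hm (hCmem ξ hξ)) hfw
  set ξ₀ := (z - w)/(z - cw) with hξ₀def
  have hξ₀ : ‖ξ₀‖ < 1 := abs_ratio_lt_one hzim hwim
  have hCξ₀ : C ξ₀ = z := by
    rw [hC, hξ₀def]
    have h1 : z - cw ≠ 0 := sub_conj_ne hzim hwim
    have h2 : w - cw ≠ 0 := by
      rw [hcw]
      intro h
      have := congrArg Complex.im h
      simp [Complex.sub_im, Complex.conj_im] at this
      linarith
    field_simp
    ring_nf
    field_simp
  have main := Complex.norm_le_norm_of_mapsTo_ball_self hGd (hGm.mono_right Metric.ball_subset_closedBall) hG0 hξ₀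
  simp only [hG, hCξ₀] at main
  -- now convert |(fz-fw)/(fz-cfw)| ≤ |(z-w)/(z-cw)| to the normSq inequality
  have hden1 : 0 < ‖f z - (starRingEnd ℂ) (f w)‖ :=
    norm_pos_iff.mpr (sub_conj_ne (hm hz) hfw)
  have hden2 : 0 < ‖z - cw‖ := norm_pos_iff.mpr (sub_conj_ne hzim hwim)
  rw [hξ₀def, norm_div, norm_div, div_le_div_iff₀ hden1 hden2] at main
  have hsq : ‖f z - f w‖ * ‖z - cw‖ *
      (‖f z - f w‖ * ‖z - cw‖) ≤
      ‖z - w‖ * ‖f z - (starRingEnd ℂ) (f w)‖ *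
      (‖z - w‖ * ‖f z - (starRingEnd ℂ) (f w)‖) := by
    apply mul_self_le_mul_self (by positivity) main
  have e1 : ‖f z - f w‖ * ‖z - cw‖ *
      (‖f z - f w‖ * ‖z - cw‖) =
      Complex.normSq (f z - f w) * Complex.normSq (z - cw) := by
    rw [← Complex.sq_norm, ← Complex.sq_norm]; ring
  have e2 : ‖z - w‖ * ‖f z - (starRingEnd ℂ) (f w)‖ *
      (‖z - w‖ * ‖f z - (starRingEnd ℂ) (f w)‖) =
      Complex.normSq (z - w) * Complex.normSq (f z - (starRingEnd ℂ) (f w)) := by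
    rw [← Complex.sq_norm, ← Complex.sq_norm]; ring
  rw [e1, e2] at hsq
  have id1 := normSq_conj_sub (f z) (f w)
  have id2 := normSq_conj_sub z w
  rw [← hcw] at id2
  nlinarith [hsq, id1, id2, Complex.normSq_nonneg (f z - (starRingEnd ℂ) (f w)),
    Complex.normSq_nonneg (z - cw)]

lemma axis_tendsto {f : ℂ → ℂ} {c : ℂ}
    (hc : AngularLimitAtInfty (fun z => z * (f z - z)) c) :
    Tendsto (fun y : ℝ => f ((y:ℂ)*Complex.I) - (y:ℂ)*Complex.I) atTop (nhds 0) := by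
  have hδ1 : (0:ℝ) < π/4 := by positivity
  have hδ2 : π/4 < π/2 := by linarith [Real.pi_pos]
  have hax : Tendsto (fun y : ℝ => (y:ℂ)*Complex.I)
      atTop (Filter.comap (fun z : ℂ => ‖z‖) Filter.atTop ⊓
        Filter.principal {z : ℂ | 0 < z.im ∧ π/4 ≤ Complex.arg z ∧
          Complex.arg z ≤ Real.pi - π/4}) := by
    rw [tendsto_inf]
    constructor
    · rw [tendsto_comap_iff]
      have : (fun y : ℝ => ‖(y:ℂ)*Complex.I‖) = fun y : ℝ => |y| := by
        funext y; simp
      rw [Function.comp_def]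
      simp only [this]
      exact tendsto_abs_atTop_atTop
    · rw [tendsto_principal]
      filter_upwards [eventually_gt_atTop (0:ℝ)] with y hy
      have harg : Complex.arg ((y:ℂ)*Complex.I) = π/2 := by
        rw [Complex.arg_eq_pi_div_two_iff]
        constructor <;> simp [hy]
      refine ⟨by simp [hy], ?_, ?_⟩ <;> rw [harg] <;> linarith [Real.pi_pos]
  have hcomp : Tendsto (fun y : ℝ => ((y:ℂ)*Complex.I) * (f ((y:ℂ)*Complex.I) - (y:ℂ)*Complex.I))
      atTop (nhds c) := (hc (π/4) hδ1 hδ2).comp hax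
  have hinv : Tendsto (fun y : ℝ => ((y:ℂ)*Complex.I)⁻¹) atTop (nhds 0) := by
    rw [tendsto_zero_iff_norm_tendsto_zero]
    have : (fun y : ℝ => ‖((y:ℂ)*Complex.I)⁻¹‖) = fun y : ℝ => |y|⁻¹ := by
      funext y; simp
    rw [this]
    exact tendsto_inv_atTop_zero.comp tendsto_abs_atTop_atTop
  have := hcomp.mul hinv
  rw [mul_zero] at this
  apply this.congr'
  filter_upwards [eventually_gt_atTop (0:ℝ)] with y hy
  have hne : ((y:ℂ)*Complex.I) ≠ 0 := by
    simp [Complex.ext_iff]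
    intro h; exact absurd h (ne_of_gt hy)
  field_simp
  exact mul_div_cancel_left₀ _ (by exact_mod_cast hy.ne')

lemma im_le_im_of {f : ℂ → ℂ} (hd : DifferentiableOn ℂ f UHP) (hm : Set.MapsTo f UHP UHP)
    (hE : Tendsto (fun y : ℝ => f ((y:ℂ)*Complex.I) - (y:ℂ)*Complex.I) atTop (nhds 0))
    {z : ℂ} (hz : z ∈ UHP) : z.im ≤ (f z).im := by
  set E : ℝ → ℂ := fun y => f ((y:ℂ)*Complex.I) - (y:ℂ)*Complex.I with hEdef
  have hzim : 0 < z.im := hz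
  have hmemI : ∀ y : ℝ, 0 < y → ((y:ℂ)*Complex.I) ∈ UHP := by
    intro y hy; show 0 < ((y:ℂ)*Complex.I).im; simp [hy]
  -- components
  have c1 : Tendsto (fun y : ℝ => (E y).im) atTop (nhds 0) := by
    have := (Complex.continuous_im.tendsto 0).comp hE
    simpa [Function.comp_def] using this
  have c2 : Tendsto (fun y : ℝ => (starRingEnd ℂ) (E y)) atTop (nhds 0) := by
    have := (Complex.continuous_conj.tendsto 0).comp hE
    simpa [Function.comp_def] using this
  have hyinv : Tendsto (fun y : ℝ => y⁻¹) atTop (nhds 0) := tendsto_inv_atTop_zero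
  -- first factor y / (f(yI)).im → 1
  have h1 : Tendsto (fun y : ℝ => y / (f ((y:ℂ)*Complex.I)).im) atTop (nhds 1) := by
    have ht : Tendsto (fun y : ℝ => 1 + (E y).im * y⁻¹) atTop (nhds 1) := by
      have := (c1.mul hyinv).const_add 1
      simpa using this
    have hinv := ht.inv₀ one_ne_zero
    rw [inv_one] at hinv
    apply hinv.congr'
    filter_upwards [eventually_gt_atTop (1:ℝ),
      c1.eventually_const_lt (by norm_num : (-1/2:ℝ) < 0)] with y hy hb2
    have hfim : (f ((y:ℂ)*Complex.I)).im = y + (E y).im := by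
      rw [hEdef]; simp
    rw [hfim]
    have hy0 : y ≠ 0 := by positivity
    have hpos : y + (E y).im > 0 := by linarith
    have he : 1 + (E y).im * y⁻¹ = (y + (E y).im) / y := by field_simp
    rw [he, inv_div]
  -- second factor
  have hZne : ∀ y : ℝ, 0 < y → z + (y:ℂ)*Complex.I ≠ 0 := by
    intro y hy h
    have himz : (z + (y:ℂ)*Complex.I).im = z.im + y := by simp
    rw [h] at himz
    simp at himz
    linarith
  have habsZ : Tendsto (fun y : ℝ => ‖z + (y:ℂ)*Complex.I‖) atTop atTop := by
    apply tendsto_atTop_mono' atTop (f₁ := fun y : ℝ => z.im + y)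
    · filter_upwards with y
      calc z.im + y = (z + (y:ℂ)*Complex.I).im := by simp
      _ ≤ |(z + (y:ℂ)*Complex.I).im| := le_abs_self _
      _ ≤ ‖z + (y:ℂ)*Complex.I‖ := Complex.abs_im_le_norm _
      _ = ‖z + (y:ℂ)*Complex.I‖ := rfl
    exact tendsto_atTop_add_const_left atTop z.im tendsto_id
  have hZinv : Tendsto (fun y : ℝ => (z + (y:ℂ)*Complex.I)⁻¹) atTop (nhds 0) := by
    rw [tendsto_zero_iff_norm_tendsto_zero]
    simpa [norm_inv, Function.comp_def] using tendsto_inv_atTop_zero.comp habsZ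
  have hQ : Tendsto (fun y : ℝ =>
      (f z + (y:ℂ)*Complex.I - (starRingEnd ℂ) (E y)) / (z + (y:ℂ)*Complex.I))
      atTop (nhds 1) := by
    have hnum : Tendsto (fun y : ℝ => f z - z - (starRingEnd ℂ) (E y)) atTop
        (nhds (f z - z)) := by
      simpa using tendsto_const_nhds.sub c2
    have hm0 := hnum.mul hZinv
    rw [mul_zero] at hm0
    have hadd := hm0.const_add (1:ℂ)
    rw [add_zero] at hadd
    apply hadd.congr'
    filter_upwards [eventually_gt_atTop (0:ℝ)] with y hy
    field_simp [hZne y hy]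
    ring
  have h2 : Tendsto (fun y : ℝ =>
      Complex.normSq (f z - (starRingEnd ℂ) (f ((y:ℂ)*Complex.I))) /
        Complex.normSq (z + (y:ℂ)*Complex.I)) atTop (nhds 1) := by
    have hcont : Tendsto Complex.normSq (nhds 1) (nhds 1) := by
      have := Complex.continuous_normSq.tendsto 1
      simpa using this
    have hcomp := hcont.comp hQ
    apply hcomp.congr'
    filter_upwards with y
    show Complex.normSq _ = _
    rw [Complex.normSq_div]
    congr 2
    have hfy : f ((y:ℂ)*Complex.I) = (y:ℂ)*Complex.I + E y := by rw [hEdef]; ring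
    rw [hfy, map_add]
    have : (starRingEnd ℂ) ((y:ℂ)*Complex.I) = -((y:ℂ)*Complex.I) := by
      simp [Complex.ext_iff]
    rw [this]
    ring
  -- combine
  have hg : Tendsto (fun y : ℝ => z.im * (y / (f ((y:ℂ)*Complex.I)).im) *
      (Complex.normSq (f z - (starRingEnd ℂ) (f ((y:ℂ)*Complex.I))) /
        Complex.normSq (z + (y:ℂ)*Complex.I))) atTop (nhds z.im) := by
    have := (h1.const_mul z.im).mul h2
    rw [mul_one, mul_one] at this
    exact this
  apply le_of_tendsto hg
  filter_upwards [eventually_gt_atTop (0:ℝ)] with y hy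
  have hsp := schwarz_pick hd hm hz (hmemI y hy)
  have hconj : (starRingEnd ℂ) ((y:ℂ)*Complex.I) = -((y:ℂ)*Complex.I) := by
    simp [Complex.ext_iff]
  rw [hconj, sub_neg_eq_add] at hsp
  have himy : ((y:ℂ)*Complex.I).im = y := by simp
  rw [himy] at hsp
  have hfy : 0 < (f ((y:ℂ)*Complex.I)).im := hm (hmemI y hy)
  have hM : 0 < Complex.normSq (z + (y:ℂ)*Complex.I) := Complex.normSq_pos.mpr (hZne y hy)
  rw [show z.im * (y / (f ((y:ℂ)*Complex.I)).im) *
      (Complex.normSq (f z - (starRingEnd ℂ) (f ((y:ℂ)*Complex.I))) /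
        Complex.normSq (z + (y:ℂ)*Complex.I)) =
      (z.im * y * Complex.normSq (f z - (starRingEnd ℂ) (f ((y:ℂ)*Complex.I)))) /
        ((f ((y:ℂ)*Complex.I)).im * Complex.normSq (z + (y:ℂ)*Complex.I)) by
        field_simp]
  rw [div_le_iff₀ (by positivity)]
  nlinarith [hsp]

lemma convex_UHP : Convex ℝ UHP := by
  intro x hx y hy a b ha hb hab
  have hx' : 0 < x.im := hx
  have hy' : 0 < y.im := hy
  show 0 < (a • x + b • y).im
  rw [Complex.add_im]
  have e1 : (a • x).im = a * x.im := by simp [Complex.smul_im]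
  have e2 : (b • y).im = b * y.im := by simp [Complex.smul_im]
  rw [e1, e2]
  rcases eq_or_lt_of_le ha with h0 | h0
  · have hb1 : b = 1 := by linarith
    rw [← h0, hb1]; simpa using hy'
  · have := mul_pos h0 hx'
    nlinarith [mul_nonneg hb (le_of_lt hy')]

lemma forward {f : ℂ → ℂ} (hf : MemHu f) {z₀ : ℂ} (hz₀ : z₀ ∈ UHP) :
    z₀.im < (f z₀).im ∨ f z₀ = z₀ := by
  obtain ⟨hd, hm, hinj, c, hc⟩ := hf
  have hE := axis_tendsto hc
  have him : ∀ z ∈ UHP, z.im ≤ (f z).im := fun z hz => im_le_im_of hd hm hE hz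
  rcases lt_or_eq_of_le (him z₀ hz₀) with h | h
  · exact Or.inl h
  · right
    set g : ℂ → ℂ := fun z => f z - z with hg
    have hga : AnalyticOnNhd ℂ g UHP :=
      (hd.sub differentiableOn_id).analyticOnNhd isOpen_UHP
    rcases hga.is_constant_or_isOpen convex_UHP.isPreconnected with ⟨v, hv⟩ | hopen
    · have hveq : Tendsto (fun _ : ℝ => v) atTop (nhds 0) := by
        apply hE.congr'
        filter_upwards [eventually_gt_atTop (0:ℝ)] with y hy
        have hmem : ((y:ℂ)*Complex.I) ∈ UHP := by
          show 0 < ((y:ℂ)*Complex.I).im; simp [hy]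
        exact (hv _ hmem)
      have hv0 : v = 0 := tendsto_nhds_unique (tendsto_const_nhds : Tendsto (fun _ : ℝ => v) atTop (nhds v)) hveq
      have := hv z₀ hz₀
      rw [hv0] at this
      rw [hg] at this
      exact sub_eq_zero.mp this
    · exfalso
      have himg : IsOpen (g '' UHP) := hopen UHP le_rfl isOpen_UHP
      have hmem : g z₀ ∈ g '' UHP := ⟨z₀, hz₀, rfl⟩
      obtain ⟨r, hr, hball⟩ := Metric.isOpen_iff.mp himg _ hmem
      have hp : g z₀ - ((r/2):ℂ)*Complex.I ∈ Metric.ball (g z₀) r := by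
        rw [Metric.mem_ball, dist_eq_norm]
        have : g z₀ - ((r/2):ℂ)*Complex.I - g z₀ = -(((r/2):ℂ)*Complex.I) := by ring
        rw [this]
        simp [abs_of_nonneg (le_of_lt hr)]
        linarith
      obtain ⟨z', hz', hgz'⟩ := hball hp
      have h2 : 0 ≤ (g z').im := by
        have : (g z').im = (f z').im - z'.im := by rw [hg]; simp
        rw [this]
        linarith [him z' hz']
      rw [hgz'] at h2
      have h3 : (g z₀ - ((r/2):ℂ)*Complex.I).im = ((f z₀).im - z₀.im) - r/2 := by
        rw [hg]; simp
      rw [h3, ← h] at h2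
      linarith

lemma memHu_id : MemHu (id : ℂ → ℂ) := by
  refine ⟨differentiableOn_id, Set.mapsTo_id _, Set.injOn_id _, ⟨0, ?_⟩⟩
  intro δ h1 h2
  have : (fun z : ℂ => z * (id z - z)) = fun _ : ℂ => (0:ℂ) := by
    funext z; simp
  rw [this]
  simpa using tendsto_const_nhds

/-- For every z₀ ∈ ℍ, the set of values {f(z₀) : f ∈ H_u} equals
{z ∈ ℂ : Im z > Im z₀} ∪ {z₀}. -/
theorem value_set_Hu (z₀ : ℂ) (hz₀ : z₀ ∈ UHP) :
    {w : ℂ | ∃ f : ℂ → ℂ, MemHu f ∧ f z₀ = w} =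
      {z : ℂ | z₀.im < z.im} ∪ {z₀} := by
  ext w
  constructor
  · rintro ⟨f, hf, rfl⟩
    rcases forward hf hz₀ with h | h
    · exact Or.inl h
    · right; rw [h]; rfl
  · rintro (hw | hw)
    · -- z₀.im < w.im : use the slit map
      have hw' : z₀.im < w.im := hw
      obtain ⟨a, t, ht, hid⟩ := exists_params z₀ w hz₀ hw'
      refine ⟨slitMap a t, ⟨slit_diff ht.le, fun z hz => slit_im_pos ht.le hz,
        slit_injOn ht.le, ⟨-t, by exact_mod_cast slit_angular a t ht.le⟩⟩, ?_⟩
      have hu : 2*(t:ℂ) - (z₀ - a)^2 = -((w - a)^2) := by linear_combination -hid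
      have hre : 0 < (-(Complex.I)*(w - a)).re := by
        simp only [neg_mul, Complex.neg_re, Complex.mul_re, Complex.I_re, Complex.I_im,
          Complex.sub_im, Complex.sub_re, Complex.ofReal_im, Complex.ofReal_re]
        have : 0 < w.im := lt_trans hz₀ hw'
        simp
        linarith
      have hsq : (-(Complex.I)*(w - a))^2 = 2*(t:ℂ) - (z₀ - a)^2 := by
        rw [hu]
        rw [mul_pow, neg_pow, Complex.I_sq]
        ring
      rw [slitMap, msqrt_eq hre hsq]
      ring_nf
      rw [Complex.I_sq]
      ring
    · -- w = z₀ : identity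
      have : w = z₀ := hw
      exact ⟨id, memHu_id, this.symm⟩

end
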